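/- In a noise-free setting where the accessibility relation K is an equivalence relation preserved by the dynamics (if K(t,s), the advised action is executable at t whenever executable at s, and sensing outcomes agree on K-related situations after the same action sequence from the designated path), epistemic correctness implies correctness: if from every K-accessible s the belief-state execution V* reaches the final control state with the goal holding at all K-accessible situations of the final belief state, then from every K-accessible s there is an s' with T*(Q0,s,QF,s') and φ(s'). -/

import Mathlib

/-- Noise-free one-step transition T. -/
def TStep {S A O Q : Type} (doAct : A → S → S) (Poss : A → S → Prop)
    (SF : A → S → O) (γ : Q → A) (δ : Q → O → Q)
    (c c' : Q × S) : Prop :=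
  ∃ a o, γ c.1 = a ∧ Poss a c.2 ∧ SF a c.2 = o ∧ δ c.1 o = c'.1 ∧ c'.2 = doAct a c.2

/-- Belief-level one-step transition V: the advised action must be executable at
all K-accessible situations. -/
def VStep {S A O Q : Type} (doAct : A → S → S) (Poss : A → S → Prop)
    (SF : A → S → O) (K : S → S → Prop) (γ : Q → A) (δ : Q → O → Q)
    (c c' : Q × S) : Prop :=
  ∃ a o, γ c.1 = a ∧ (∀ t, K t c.2 → Poss a t) ∧ SF a c.2 = o ∧ δ c.1 o = c'.1 ∧
    c'.2 = doAct a c.2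

/-- Theorem 2: in a noise-free setting, epistemic correctness implies correctness. -/
theorem epistemic_correct_implies_correct {S A O Q : Type}
    (doAct : A → S → S) (Poss : A → S → Prop) (SF : A → S → O)
    (K : S → S → Prop) (γ : Q → A) (δ : Q → O → Q)
    (Q0 QF : Q) (S0 : S) (φ : S → Prop)
    (hequiv : Equivalence K)
    (hpres : ∀ t s (q q' : Q) a, K t s →
      TStep doAct Poss SF γ δ (q, s) (q', doAct a s) →
      TStep doAct Poss SF γ δ (q, t) (q', doAct a t) ∧ K (doAct a t) (doAct a s))
    (hepi : ∀ s, K s S0 → ∃ s',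
      Relation.ReflTransGen (VStep doAct Poss SF K γ δ) (Q0, s) (QF, s') ∧
      (∀ t, K t s' → φ t)) :
    ∀ s, K s S0 → ∃ s',
      Relation.ReflTransGen (TStep doAct Poss SF γ δ) (Q0, s) (QF, s') ∧ φ s' := by
  intro s hs
  obtain ⟨s', hV, hφ⟩ := hepi s hs
  refine ⟨s', ?_, hφ s' (hequiv.refl s')⟩
  refine Relation.ReflTransGen.mono ?_ _ _ hV
  rintro c c' ⟨a, o, h1, h2, h3, h4, h5⟩
  exact ⟨a, o, h1, h2 c.2 (hequiv.refl c.2), h3, h4, h5⟩
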